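/- Let g be a real topological Lie algebra with topological dual g′, let E ⊆ g′ be a semi-equicontinuous subset, and let x ∈ g satisfy (ad x)² = 0. Assume that for every λ ∈ E and every t ∈ ℝ the functional λ ∘ (id + t·ad x) again belongs to E. Then every λ ∈ E vanishes on [x,g], i.e. λ([x,y]) = 0 for all λ ∈ E and y ∈ g. -/

import Mathlib

/-- If `E` is a semi-equicontinuous set of continuous linear functionals on a
real topological Lie algebra `g`, `x ∈ g` satisfies `(ad x)² = 0`, and `E` is invariant under
precomposition with `id + t·ad x` for all `t ∈ ℝ`, then every `λ ∈ E` vanishes on `[x, g]`. -/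
theorem semiEquicontinuous_vanishes_on_bracket
    {g : Type*} [LieRing g] [LieAlgebra ℝ g] [TopologicalSpace g]
    [IsTopologicalAddGroup g] [ContinuousSMul ℝ g]
    (E : Set (g →L[ℝ] ℝ))
    (hE : ∃ U : Set g, IsOpen U ∧ U.Nonempty ∧ ∃ C : ℝ, ∀ x ∈ U, ∀ lam ∈ E, -lam x ≤ C)
    (x : g) (hx : ∀ y : g, ⁅x, ⁅x, y⁆⁆ = 0)
    (hinv : ∀ lam ∈ E, ∀ t : ℝ, ∃ mu ∈ E, ∀ y : g, mu y = lam (y + t • ⁅x, y⁆)) :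
    ∀ lam ∈ E, ∀ y : g, lam ⁅x, y⁆ = 0 := by
  obtain ⟨U, hUopen, ⟨u0, hu0⟩, C, hC⟩ := hE
  intro lam hlam y
  have key : ∀ u ∈ U, lam ⁅x, u⁆ = 0 := by
    intro u hu
    by_contra h
    obtain ⟨mu, hmu, hmueq⟩ := hinv lam hlam (-(C + 1 + lam u) / lam ⁅x, u⁆)
    have h1 := hC u hu mu hmu
    rw [hmueq u] at h1
    have h2 : lam (u + (-(C + 1 + lam u) / lam ⁅x, u⁆) • ⁅x, u⁆)
        = lam u + (-(C + 1 + lam u) / lam ⁅x, u⁆) * lam ⁅x, u⁆ := by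
      rw [map_add, map_smul]; rfl
    rw [h2, div_mul_cancel₀ _ h] at h1
    linarith
  have hcont : ContinuousAt (fun t : ℝ => u0 + t • y) 0 := by fun_prop
  have hmem : ∀ᶠ t in nhds (0 : ℝ), u0 + t • y ∈ U := by
    apply hcont.eventually_mem
    simpa using hUopen.mem_nhds hu0
  have hmem' : ∀ᶠ t in nhdsWithin (0 : ℝ) {0}ᶜ, u0 + t • y ∈ U :=
    hmem.filter_mono nhdsWithin_le_nhds
  obtain ⟨t, htU, htne⟩ := (hmem'.and self_mem_nhdsWithin).exists
  have h3 : lam ⁅x, u0 + t • y⁆ = 0 := key _ htU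
  have h4 : lam ⁅x, u0⁆ = 0 := key _ hu0
  have h5 : lam ⁅x, u0 + t • y⁆ = lam ⁅x, u0⁆ + t * lam ⁅x, y⁆ := by
    rw [lie_add, lie_smul, map_add, map_smul]; rfl
  rw [h5, h4, zero_add] at h3
  have ht : t ≠ 0 := htne
  exact (mul_eq_zero.mp h3).resolve_left ht
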